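/- Let G_i (i ∈ I) be groups, F a free group, and h : lim← *_{i∈I} G_i → F a non-trivial homomorphism. Suppose A ⊆ I satisfies A ∉ supp(h) and, for every X ⊆ I, A ∪ X ∉ supp(h) implies (I \ X) ∪ A ∈ supp(h). Then the family u = { X ⊆ I : A ∪ X ∈ supp(h) } is a countably complete ultrafilter on I. -/

import Mathlib

open Monoid

noncomputable section
open scoped Classical

variable (I : Type*) (G : I → Type*) [∀ i, Group (G i)]

/-- The canonical bonding homomorphism `p_{XY} : *_{i∈Y} G_i → *_{i∈X} G_i` for
finite subsets `X ⊆ Y` of `I`: identity on each `G_i` with `i ∈ X`, trivial otherwise. -/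
def bond {I : Type*} {G : I → Type*} [∀ i, Group (G i)] {X Y : Finset I} (_ : X ⊆ Y) :
    CoprodI (fun i : Y => G i) →* CoprodI (fun i : X => G i) :=
  CoprodI.lift fun i =>
    if h : (i : I) ∈ X then (CoprodI.of (M := fun j : X => G j) (i := ⟨(i : I), h⟩)) else 1

/-- The canonical inclusion `*_{i∈X} G_i → *_{i∈Y} G_i` for finite `X ⊆ Y`. -/
def incl {I : Type*} {G : I → Type*} [∀ i, Group (G i)] {X Y : Finset I} (h : X ⊆ Y) :
    CoprodI (fun i : X => G i) →* CoprodI (fun i : Y => G i) :=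
  CoprodI.lift fun i => (CoprodI.of (M := fun j : Y => G j) (i := ⟨(i : I), h i.2⟩))

lemma bond_incl {I : Type*} {G : I → Type*} [∀ i, Group (G i)] (S : Set I)
    {X Y : Finset I} (h : X ⊆ Y)
    (z : CoprodI (fun i : (Y.filter (· ∈ S)) => G i)) :
    bond h (incl (Finset.filter_subset _ Y) z)
      = incl (Finset.filter_subset (· ∈ S) X)
          (bond (Finset.filter_subset_filter _ h) z) := by
  have : (bond h).comp (incl (Finset.filter_subset (· ∈ S) Y))
      = (incl (Finset.filter_subset (· ∈ S) X)).comp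
          (bond (G := G) (Finset.filter_subset_filter (· ∈ S) h)) := by
    apply CoprodI.ext_hom
    intro i
    ext g
    obtain ⟨i, hi⟩ := i
    have hiS : i ∈ S := (Finset.mem_filter.1 hi).2
    have hiY : i ∈ Y := (Finset.mem_filter.1 hi).1
    simp only [MonoidHom.comp_apply, incl, bond, CoprodI.lift_of]
    by_cases hx : i ∈ X
    · rw [dif_pos hx, dif_pos (Finset.mem_filter.2 ⟨hx, hiS⟩), CoprodI.lift_of]
    · rw [dif_neg hx, dif_neg (fun hc => hx (Finset.mem_filter.1 hc).1),
        MonoidHom.one_apply, MonoidHom.one_apply, map_one]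
  exact DFunLike.congr_fun this z

/-- The unrestricted free product `lim← *_{i∈I} G_i`: the inverse limit of the free
products of finite subfamilies, realized as the subgroup of the product consisting of
families compatible under the bonding maps. -/
def UFP : Subgroup (Π X : Finset I, CoprodI (fun i : X => G i)) where
  carrier := {x | ∀ ⦃X Y : Finset I⦄ (h : X ⊆ Y), bond h (x Y) = x X}
  one_mem' := by intro X Y h; simp
  mul_mem' := by intro a b ha hb X Y h; simp only [Pi.mul_apply, map_mul, ha h, hb h]
  inv_mem' := by intro a ha X Y h; simp only [Pi.inv_apply, map_inv, ha h]

/-- The canonical projection `p_S : lim← *_{i∈I} G_i → lim← *_{i∈I} G_i` for `S ⊆ I`,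
defined by `p_S(x)(X) = x(X ∩ S)` (included into `*_{i∈X} G_i`). -/
def pProj (S : Set I) : UFP I G →* UFP I G where
  toFun x := ⟨fun X => incl (Finset.filter_subset (· ∈ S) X) (x.1 (X.filter (· ∈ S))),
    by
      intro X Y h
      rw [bond_incl S h, x.2 (Finset.filter_subset_filter _ h)]⟩
  map_one' := by ext X; simp
  map_mul' a b := by ext X; simp

/-- The canonical projection of the inverse limit to its `X₀`-th coordinate. -/
def finProj (X₀ : Finset I) : UFP I G →* CoprodI (fun i : X₀ => G i) :=
  (Pi.evalMonoidHom _ X₀).comp (UFP I G).subtype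

/-- `supp(h) = { X ⊆ I : p_X(g) = e → h(g) = e for all g }`. -/
def supp {F : Type*} [Group F] (h : UFP I G →* F) : Set (Set I) :=
  {X | ∀ g : UFP I G, pProj I G X g = 1 → h g = 1}

/-- An ultrafilter is countably complete if it is closed under countable intersections. -/
def CountablyComplete {I : Type*} (u : Ultrafilter I) : Prop :=
  ∀ s : ℕ → Set I, (∀ n, s n ∈ u) → (⋂ n, s n) ∈ u


namespace CritAux

open FreeGroup List

variable {β : Type*}

/-- Adjacent letters do not cancel. -/
def NC (x y : β × Bool) : Prop := ¬(x.1 = y.1 ∧ x.2 = !y.2)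

lemma chain'_reduce [DecidableEq β] (L : List (β × Bool)) : List.Chain' NC (reduce L) := by
  induction L with
  | nil => exact List.isChain_nil
  | cons x t ih =>
    rw [FreeGroup.reduce.cons]
    cases h : reduce t with
    | nil => exact List.isChain_singleton x
    | cons hd tl =>
      rw [h] at ih
      by_cases hc : x.1 = hd.1 ∧ x.2 = !hd.2
      · simp only [if_pos hc]; exact ih.tail
      · simp only [if_neg hc]
        exact List.isChain_cons_cons.2 ⟨hc, ih⟩

lemma reduce_eq_self [DecidableEq β] (L : List (β × Bool)) (h : List.Chain' NC L) :
    reduce L = L := by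
  induction L with
  | nil => rfl
  | cons x t ih =>
    have ht : reduce t = t := ih h.tail
    rw [FreeGroup.reduce.cons, ht]
    cases t with
    | nil => rfl
    | cons hd tl =>
      have hnc : NC x hd := (List.isChain_cons_cons.1 h).1
      simp only [if_neg hnc]

lemma norm_mk_chain [DecidableEq β] (L : List (β × Bool)) (h : List.Chain' NC L) :
    FreeGroup.norm (mk L) = L.length := by
  rw [FreeGroup.norm, toWord_mk, reduce_eq_self L h]

lemma chain'_toWord [DecidableEq β] (y : FreeGroup β) : List.Chain' NC y.toWord := by
  rw [← reduce_toWord]; exact chain'_reduce _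

lemma invRev_cons (x : β × Bool) (L : List (β × Bool)) :
    invRev (x :: L) = invRev L ++ [(x.1, !x.2)] := by
  simp [invRev]

/-- Cyclic decomposition of a reduced word. -/
lemma cyc_decomp : ∀ (n : ℕ) (L : List (β × Bool)), L.length ≤ n → List.Chain' NC L →
    L ≠ [] →
    ∃ u d : List (β × Bool), L = u ++ d ++ invRev u ∧ d ≠ [] ∧
      (∀ a ∈ d.getLast?, ∀ b ∈ d.head?, NC a b) := by
  intro n
  induction n with
  | zero => intro L hL _ hne; simp at hL; exact absurd hL hne
  | succ n ih =>
    intro L hL hchain hne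
    by_cases hcyc : ∀ a ∈ L.getLast?, ∀ b ∈ L.head?, NC a b
    · exact ⟨[], L, by simp, hne, hcyc⟩
    · push_neg at hcyc
      obtain ⟨a, ha, b, hb, hab⟩ := hcyc
      simp only [NC, not_not] at hab
      obtain ⟨x, t, rfl⟩ := List.exists_cons_of_ne_nil hne
      have hbx : b = x := by simpa using hb.symm
      subst hbx
      rcases eq_or_ne t [] with rfl | htne
      · simp only [List.getLast?_singleton, Option.mem_some_iff] at ha
        subst ha
        simp at hab
      obtain ⟨c, t', rfl⟩ := List.exists_cons_of_ne_nil htne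
      have hsplit : b :: c :: t' = (b :: (c :: t').dropLast) ++ [a] := by
        conv_lhs => rw [← List.dropLast_append_getLast? a ha]
        rw [List.dropLast_cons₂]
      set mid := (c :: t').dropLast with hmid
      -- a is the cancelling letter
      have haval : a = (b.1, !b.2) := by
        obtain ⟨a1, a2⟩ := a
        obtain ⟨h1, h2⟩ := hab
        exact Prod.ext h1 h2
      -- mid ≠ []
      rcases eq_or_ne mid [] with hmnil | hmne
      · rw [hmnil] at hsplit
        simp only [List.cons_append, List.nil_append] at hsplit
        have : NC b a := by
          have := hchain
          rw [hsplit] at this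
          exact (List.isChain_cons_cons.1 this).1
        rw [haval] at this
        simp [NC] at this
      -- Chain' NC mid
      have hchain' : List.Chain' NC (mid ++ [a]) := by
        have := hchain
        rw [hsplit] at this
        exact this.tail
      have hchmid : List.Chain' NC mid := (List.isChain_append.1 hchain').1
      have hlen : mid.length ≤ n := by
        have h1 : (b :: c :: t').length = mid.length + 2 := by
          rw [hsplit]; simp
        simp only [List.length_cons] at h1 hL
        omega
      obtain ⟨u', d, hdec, hdne, hdcyc⟩ := ih mid hlen hchmid hmne
      refine ⟨b :: u', d, ?_, hdne, hdcyc⟩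
      rw [hsplit, hdec, invRev_cons, ← haval]
      simp [List.append_assoc]

end CritAux

namespace CritAux

open FreeGroup List

variable {β : Type*}

/-- `n`-fold repetition of a word. -/
def repList (d : List (β × Bool)) : ℕ → List (β × Bool)
  | 0 => []
  | n + 1 => d ++ repList d n

lemma repList_succ (d : List (β × Bool)) (n : ℕ) :
    repList d (n + 1) = d ++ repList d n := rfl

lemma mk_repList [DecidableEq β] (d : List (β × Bool)) (n : ℕ) :
    mk (repList d n) = (mk d) ^ n := by
  induction n with
  | zero => rw [pow_zero, repList, FreeGroup.one_eq_mk]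
  | succ n ih => rw [repList, ← FreeGroup.mul_mk, ih, pow_succ']

lemma repList_length (d : List (β × Bool)) (n : ℕ) :
    (repList d n).length = n * d.length := by
  induction n with
  | zero => simp [repList]
  | succ n ih => simp [repList, ih]; ring

lemma repList_head (d : List (β × Bool)) (hd : d ≠ []) (n : ℕ) :
    (repList d (n + 1)).head? = d.head? := by
  rw [repList]
  exact List.head?_append_of_ne_nil _ hd

lemma repList_getLast (d : List (β × Bool)) (hd : d ≠ []) (n : ℕ) :
    (repList d (n + 1)).getLast? = d.getLast? := by
  induction n with
  | zero => simp [repList]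
  | succ n ih =>
    rw [repList_succ d (n + 1)]
    have hne : repList d (n + 1) ≠ [] := by
      rw [repList_succ]
      exact fun h => hd (List.append_eq_nil_iff.1 h).1
    rw [List.getLast?_append_of_ne_nil _ hne, ih]

lemma repList_chain (d : List (β × Bool)) (hd : d ≠ [])
    (hch : List.Chain' NC d)
    (hcyc : ∀ a ∈ d.getLast?, ∀ b ∈ d.head?, NC a b) (n : ℕ) :
    List.Chain' NC (repList d n) := by
  induction n with
  | zero => exact List.isChain_nil
  | succ n ih =>
    rw [repList]
    refine List.isChain_append.2 ⟨hch, ih, ?_⟩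
    intro x hx y hy
    cases n with
    | zero => simp [repList] at hy
    | succ n =>
      rw [repList_head d hd n] at hy
      exact hcyc x hx y hy

lemma norm_pow_ge [DecidableEq β] (y : FreeGroup β) (hy : y ≠ 1) {a : ℕ} (ha : 1 ≤ a) :
    FreeGroup.norm y + a ≤ FreeGroup.norm (y ^ a) + 1 := by
  have chainL := chain'_toWord y
  have Lne : y.toWord ≠ [] := by
    intro h
    exact hy (by rw [← FreeGroup.mk_toWord (x := y), h, FreeGroup.one_eq_mk])
  obtain ⟨u, d, hdec, hdne, hdcyc⟩ :=
    cyc_decomp y.toWord.length y.toWord le_rfl chainL Lne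
  rw [hdec] at chainL
  obtain ⟨hchud, hchinv, hbd2⟩ := List.isChain_append.1 chainL
  obtain ⟨hchu, hchd, hbd1⟩ := List.isChain_append.1 hchud
  -- the boundary between d and invRev u
  have hbd2' : ∀ x ∈ d.getLast?, ∀ z ∈ (invRev u).head?, NC x z := by
    intro x hx z hz
    refine hbd2 x ?_ z hz
    exact List.mem_getLast?_append_of_mem_getLast? hx
  -- y as a conjugate
  have hy_eq : y = mk u * mk d * (mk u)⁻¹ := by
    rw [FreeGroup.inv_mk, FreeGroup.mul_mk, FreeGroup.mul_mk, ← hdec, FreeGroup.mk_toWord]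
  have hconj : y = (MulAut.conj (mk u)) (mk d) := by
    rw [MulAut.conj_apply, hy_eq]
  have hpow : y ^ a = mk (u ++ repList d a ++ invRev u) := by
    rw [hconj, ← map_pow, MulAut.conj_apply, ← mk_repList, FreeGroup.inv_mk,
      FreeGroup.mul_mk, FreeGroup.mul_mk]
  -- the word for y ^ a is reduced
  obtain ⟨a', rfl⟩ : ∃ a', a = a' + 1 := ⟨a - 1, by omega⟩
  have hWne : repList d (a' + 1) ≠ [] := by
    rw [repList_succ]
    exact fun h => hdne (List.append_eq_nil_iff.1 h).1
  have hchainW : List.Chain' NC (u ++ repList d (a' + 1) ++ invRev u) := by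
    refine List.isChain_append.2 ⟨?_, hchinv, ?_⟩
    · refine List.isChain_append.2 ⟨hchu, repList_chain d hdne hchd hdcyc _, ?_⟩
      intro x hx z hz
      rw [repList_head d hdne] at hz
      exact hbd1 x hx z hz
    · intro x hx z hz
      rw [List.getLast?_append_of_ne_nil _ hWne, repList_getLast d hdne] at hx
      exact hbd2' x hx z hz
  have hnormpow : FreeGroup.norm (y ^ (a' + 1)) =
      u.length + (a' + 1) * d.length + u.length := by
    rw [hpow, norm_mk_chain _ hchainW]
    simp [repList_length, FreeGroup.invRev_length]
    ring
  have hnormy : FreeGroup.norm y = u.length + d.length + u.length := by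
    conv_lhs => rw [hconj]  -- dummy; will recompute
    rw [← hconj, FreeGroup.norm, hdec]
    simp [FreeGroup.invRev_length]
    ring
  have hdl : 1 ≤ d.length := by
    rcases Nat.eq_zero_or_pos d.length with h | h
    · exact absurd (List.length_eq_zero_iff.1 h) hdne
    · exact h
  rw [hnormpow, hnormy]
  nlinarith

lemma no_chain [DecidableEq β] (c : FreeGroup β) (hc : c ≠ 1) (ζ : ℕ → FreeGroup β)
    (hrel : ∀ m, ζ m = c * ζ (m + 1) ^ (FreeGroup.norm c + 2)) : False := by
  set a := FreeGroup.norm c + 2 with ha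
  have hane : ∀ y : FreeGroup β, y ≠ 1 →
      FreeGroup.norm y + a ≤ FreeGroup.norm (y ^ a) + 1 := fun y hy =>
    norm_pow_ge y hy (by omega)
  have hpow_le : ∀ m, FreeGroup.norm (ζ (m + 1) ^ a) ≤
      FreeGroup.norm c + FreeGroup.norm (ζ m) := by
    intro m
    have h1 : ζ (m + 1) ^ a = c⁻¹ * ζ m := by rw [hrel m, inv_mul_cancel_left]
    calc FreeGroup.norm (ζ (m + 1) ^ a) = FreeGroup.norm (c⁻¹ * ζ m) := by rw [h1]
      _ ≤ FreeGroup.norm c⁻¹ + FreeGroup.norm (ζ m) := FreeGroup.norm_mul_le _ _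
      _ = FreeGroup.norm c + FreeGroup.norm (ζ m) := by rw [FreeGroup.norm_inv_eq]
  have hne : ∀ m, ζ (m + 1) ≠ 1 := by
    intro m hone
    have h2 : ζ (m + 1 + 1) ^ a = c⁻¹ := by
      have h1 : ζ (m + 1 + 1) ^ a = c⁻¹ * ζ (m + 1) := by
        rw [hrel (m + 1), inv_mul_cancel_left]
      rw [h1, hone, mul_one]
    have h3 : ζ (m + 1 + 1) ≠ 1 := by
      intro h
      rw [h, one_pow] at h2
      exact hc (by rw [← inv_inv c, ← h2, inv_one])
    have h5 := hane _ h3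
    rw [h2, FreeGroup.norm_inv_eq] at h5
    have h4 : 1 ≤ FreeGroup.norm (ζ (m + 1 + 1)) :=
      Nat.one_le_iff_ne_zero.2 fun h => h3 (FreeGroup.norm_eq_zero.1 h)
    omega
  have hdesc : ∀ m, FreeGroup.norm (ζ (m + 1)) + 1 ≤ FreeGroup.norm (ζ m) := by
    intro m
    have h1 := hane _ (hne m)
    have h2 := hpow_le m
    omega
  have hbound : ∀ m, m + FreeGroup.norm (ζ m) ≤ FreeGroup.norm (ζ 0) := by
    intro m
    induction m with
    | zero => omega
    | succ m ih =>
      have := hdesc m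
      omega
  have := hbound (FreeGroup.norm (ζ 0) + 1)
  omega

end CritAux


section UFPLemmas

variable {I : Type*} {G : I → Type*} [∀ i, Group (G i)]

lemma incl_incl {X Y Z : Finset I} (h₁ : X ⊆ Y) (h₂ : Y ⊆ Z)
    (z : CoprodI (fun i : X => G i)) :
    incl h₂ (incl h₁ z) = incl (h₁.trans h₂) z := by
  have : (incl (G := G) h₂).comp (incl h₁) = incl (h₁.trans h₂) := by
    apply CoprodI.ext_hom
    intro i
    ext g
    simp only [MonoidHom.comp_apply, incl, CoprodI.lift_of]
  exact DFunLike.congr_fun this z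

lemma incl_self {X : Finset I} (h : X ⊆ X) (z : CoprodI (fun i : X => G i)) :
    incl h z = z := by
  have : incl (G := G) h = MonoidHom.id _ := by
    apply CoprodI.ext_hom
    intro i
    ext g
    obtain ⟨i, hi⟩ := i
    simp only [MonoidHom.comp_apply, incl, CoprodI.lift_of, MonoidHom.id_comp]
  rw [this, MonoidHom.id_apply]

lemma incl_congr {X : Finset I} {F₁ F₂ : Finset I} (hEq : F₁ = F₂)
    (h₁ : F₁ ⊆ X) (h₂ : F₂ ⊆ X) (x : Π F : Finset I, CoprodI (fun i : F => G i)) :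
    incl h₁ (x F₁) = incl h₂ (x F₂) := by
  subst hEq
  rfl

lemma pProj_apply (S : Set I) (x : UFP I G) (X : Finset I) :
    (pProj I G S x).1 X
      = incl (Finset.filter_subset (· ∈ S) X) (x.1 (X.filter (· ∈ S))) := rfl

lemma pProj_pProj (S T : Set I) (x : UFP I G) :
    pProj I G S (pProj I G T x) = pProj I G (S ∩ T) x := by
  apply Subtype.ext
  funext X
  show (pProj I G S (pProj I G T x)).1 X = (pProj I G (S ∩ T) x).1 X
  rw [pProj_apply, pProj_apply, pProj_apply, incl_incl]
  exact incl_congr (by ext i; simp [Set.mem_inter_iff, and_assoc]) _ _ x.1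

lemma pProj_univ (x : UFP I G) : pProj I G Set.univ x = x := by
  apply Subtype.ext
  funext X
  rw [pProj_apply]
  refine Eq.trans (incl_congr ?_ _ (Finset.Subset.refl X) x.1) (incl_self _ _)
  ext i
  simp

variable {F : Type*} [Group F]

lemma supp_univ (h : UFP I G →* F) : Set.univ ∈ supp I G h := by
  intro g hg
  have : g = 1 := by rw [← pProj_univ g, hg]
  rw [this, map_one]

lemma supp_mono (h : UFP I G →* F) {X Y : Set I} (hX : X ∈ supp I G h)
    (hXY : X ⊆ Y) : Y ∈ supp I G h := by
  intro g hg
  apply hX g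
  have : pProj I G X (pProj I G Y g) = pProj I G X g := by
    rw [pProj_pProj, Set.inter_eq_left.2 hXY]
  rw [← this, hg, map_one]

lemma supp_inter (h : UFP I G →* F) {S T : Set I} (hS : S ∈ supp I G h)
    (hT : T ∈ supp I G h) : S ∩ T ∈ supp I G h := by
  intro g hg
  have h1 : h (pProj I G T g) = 1 := hS _ (by rw [pProj_pProj]; exact hg)
  have h2 : h (g * (pProj I G T g)⁻¹) = 1 := by
    apply hT
    rw [map_mul, map_inv, pProj_pProj, Set.inter_self, mul_inv_cancel]
  calc h g = h (g * (pProj I G T g)⁻¹) * h (pProj I G T g) := by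
        rw [← map_mul, inv_mul_cancel_right]
    _ = 1 := by rw [h1, h2, one_mul]

end UFPLemmas

section Chain

/-- Finite "tail products" `f m * (f (m+1) * (... )^a)^a` with a fuel parameter. -/
def chainAux {M : Type*} [Monoid M] (f : ℕ → M) (a : ℕ) : ℕ → ℕ → M
  | 0, _ => 1
  | fuel + 1, m => f m * (chainAux f a fuel (m + 1)) ^ a

variable {M : Type*} [Monoid M]

lemma chainAux_collapse (f : ℕ → M) (a n : ℕ) (hf : ∀ k ≥ n, f k = 1) :
    ∀ fuel m, n ≤ m + fuel → chainAux f a (fuel + 1) m = chainAux f a fuel m := by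
  intro fuel
  induction fuel with
  | zero =>
    intro m hm
    show f m * (chainAux f a 0 (m + 1)) ^ a = chainAux f a 0 m
    rw [hf m (by omega)]
    simp [chainAux]
  | succ fuel ih =>
    intro m hm
    show f m * (chainAux f a (fuel + 1) (m + 1)) ^ a
        = f m * (chainAux f a fuel (m + 1)) ^ a
    rw [ih (m + 1) (by omega)]

lemma chainAux_add (f : ℕ → M) (a n : ℕ) (hf : ∀ k ≥ n, f k = 1) :
    ∀ j fuel m, n ≤ m + fuel → chainAux f a (fuel + j) m = chainAux f a fuel m := by
  intro j
  induction j with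
  | zero => intro fuel m _; rfl
  | succ j ih =>
    intro fuel m hm
    have : fuel + (j + 1) = (fuel + j) + 1 := by omega
    rw [this, chainAux_collapse f a n hf (fuel + j) m (by omega), ih fuel m hm]

lemma chainAux_eq (f : ℕ → M) (a : ℕ) {fuel₁ fuel₂ m : ℕ}
    (h₁ : ∀ k ≥ m + fuel₁, f k = 1) (h₂ : ∀ k ≥ m + fuel₂, f k = 1) :
    chainAux f a fuel₁ m = chainAux f a fuel₂ m := by
  rcases le_total fuel₁ fuel₂ with hle | hle
  · obtain ⟨j, rfl⟩ : ∃ j, fuel₂ = fuel₁ + j := ⟨fuel₂ - fuel₁, by omega⟩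
    rw [chainAux_add f a (m + fuel₁) h₁ j fuel₁ m (by omega)]
  · obtain ⟨j, rfl⟩ : ∃ j, fuel₁ = fuel₂ + j := ⟨fuel₁ - fuel₂, by omega⟩
    rw [chainAux_add f a (m + fuel₂) h₂ j fuel₂ m (by omega)]

lemma map_chainAux {M' : Type*} [Monoid M'] (φ : M →* M') (f : ℕ → M) (a : ℕ) :
    ∀ fuel m, φ (chainAux f a fuel m) = chainAux (fun k => φ (f k)) a fuel m := by
  intro fuel
  induction fuel with
  | zero => intro m; exact map_one φ
  | succ fuel ih =>
    intro m
    show φ (f m * (chainAux f a fuel (m + 1)) ^ a) = _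
    rw [map_mul, map_pow, ih (m + 1)]
    rfl

end Chain

section SuppInter

variable {I : Type*} {G : I → Type*} [∀ i, Group (G i)]

/-- The key lemma: `supp` is closed under countable decreasing intersections when the
target is a free group (Higman's argument). -/
lemma supp_iInter {γ : Type*} (h : UFP I G →* FreeGroup γ) (T : ℕ → Set I)
    (hdec : ∀ n, T (n + 1) ⊆ T n) (hsupp : ∀ n, T n ∈ supp I G h) :
    (⋂ n, T n) ∈ supp I G h := by
  have hanti : Antitone T := antitone_nat_of_succ_le hdec
  intro g hg
  by_contra hne
  set c : FreeGroup γ := h g with hc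
  set a : ℕ := FreeGroup.norm c + 2 with haa
  set γf : ℕ → UFP I G := fun k => pProj I G (T k) g with hγdef
  have hγval : ∀ k, h (γf k) = c := by
    intro k
    have hfix : pProj I G (T k) (γf k) = γf k := by
      simp only [hγdef]
      rw [pProj_pProj, Set.inter_self]
    have e1 : pProj I G (T k) (g * (γf k)⁻¹) = 1 := by
      rw [map_mul, map_inv, hfix, mul_inv_cancel]
    have e2 : h (g * (γf k)⁻¹) = 1 := hsupp k _ e1
    rw [map_mul, map_inv] at e2
    rw [hc]
    exact (mul_inv_eq_one.1 e2).symm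
  -- eventual vanishing of the coordinates of γf
  have hev : ∀ X : Finset I, ∃ N, ∀ k ≥ N, (γf k).1 X = 1 := by
    have hi : ∀ i : I, ∃ Ni : ℕ, ∀ k ≥ Ni, (i ∈ T k ↔ i ∈ ⋂ n, T n) := by
      intro i
      by_cases hiT : i ∈ ⋂ n, T n
      · exact ⟨0, fun k _ => ⟨fun _ => hiT, fun _ => Set.mem_iInter.1 hiT k⟩⟩
      · obtain ⟨n0, hn0⟩ : ∃ n, i ∉ T n := by
          by_contra hcon
          push_neg at hcon
          exact hiT (Set.mem_iInter.2 hcon)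
        refine ⟨n0, fun k hk => ⟨fun hik => absurd (hanti hk hik) hn0, fun him => absurd him hiT⟩⟩
    choose Nf hNf using hi
    intro X
    refine ⟨X.sup Nf, fun k hk => ?_⟩
    have hfe : X.filter (· ∈ T k) = X.filter (· ∈ ⋂ n, T n) := by
      ext i
      simp only [Finset.mem_filter, and_congr_right_iff]
      intro hiX
      have hik : Nf i ≤ k := le_trans (Finset.le_sup hiX) hk
      exact hNf i k hik
    show (γf k).1 X = 1
    simp only [hγdef]
    rw [pProj_apply,
      incl_congr hfe (Finset.filter_subset _ X) (Finset.filter_subset _ X) g.1,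
      ← pProj_apply (⋂ n, T n) g X, hg]
    rfl
  choose N hN using hev
  -- the chain elements
  have hZmem : ∀ m, (fun X => chainAux (fun k => (γf k).1 X) a (N X - m) m) ∈ UFP I G := by
    intro m X Y hXY
    rw [map_chainAux]
    have hfun : (fun k => bond hXY ((γf k).1 Y)) = fun k => (γf k).1 X :=
      funext fun k => (γf k).2 hXY
    rw [hfun]
    apply chainAux_eq
    · intro k hk
      have hkY : k ≥ N Y := by omega
      rw [← (γf k).2 hXY, hN Y k hkY, map_one]
    · intro k hk
      exact hN X k (by omega)
  set Z : ℕ → UFP I G := fun m => ⟨_, hZmem m⟩ with hZdef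
  have hZrel : ∀ m, Z m = γf m * (Z (m + 1)) ^ a := by
    intro m
    apply Subtype.ext
    funext X
    have hco : ((γf m * Z (m + 1) ^ a : UFP I G) : Π X : Finset I,
        CoprodI (fun i : X => G i)) X = (γf m).1 X * ((Z (m + 1)).1 X) ^ a := by
      rw [Subgroup.coe_mul, SubmonoidClass.coe_pow]
      rfl
    show chainAux (fun k => (γf k).1 X) a (N X - m) m = _
    rw [hco]
    rcases le_or_gt (N X) m with hm | hm
    · have h0 : N X - m = 0 := by omega
      have h1 : N X - (m + 1) = 0 := by omega
      rw [h0]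
      show (1 : CoprodI (fun i : X => G i)) = _
      have hγ1 : (γf m).1 X = 1 := hN X m hm
      have hZ1 : (Z (m + 1)).1 X = 1 := by
        show chainAux (fun k => (γf k).1 X) a (N X - (m + 1)) (m + 1) = 1
        rw [h1]
        rfl
      rw [hγ1, hZ1, one_pow, one_mul]
    · have h2 : N X - m = (N X - (m + 1)) + 1 := by omega
      rw [h2]
      rfl
  have hζrel : ∀ m, h (Z m) = c * (h (Z (m + 1))) ^ a := by
    intro m
    rw [hZrel m, map_mul, map_pow, hγval]
  exact CritAux.no_chain c hne (fun m => h (Z m)) hζrel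

end SuppInter

/-- The family `u = { X ⊆ I : A ∪ X ∈ supp(h) }` associated with a critical set `A` is a
countably complete ultrafilter on `I`. -/
theorem critical_set_ultrafilter {I : Type*} (G : I → Type*) [∀ i, Group (G i)]
    {α : Type*} (h : UFP I G →* FreeGroup α) (hnt : h ≠ 1)
    (A : Set I) (hA : A ∉ supp I G h)
    (hcrit : ∀ X : Set I, A ∪ X ∉ supp I G h → (Set.univ \ X) ∪ A ∈ supp I G h) :
    ∃ u : Ultrafilter I, CountablyComplete u ∧
      ∀ X : Set I, X ∈ u ↔ A ∪ X ∈ supp I G h := by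
  have hmem_mono : ∀ {X Y : Set I}, X ⊆ Y → A ∪ X ∈ supp I G h → A ∪ Y ∈ supp I G h :=
    fun hXY hX => supp_mono h hX (Set.union_subset_union_right A hXY)
  have hsets_inter : ∀ {X Y : Set I}, A ∪ X ∈ supp I G h → A ∪ Y ∈ supp I G h →
      A ∪ (X ∩ Y) ∈ supp I G h := by
    intro X Y hX hY
    have := supp_inter h hX hY
    rwa [← Set.union_inter_distrib_left] at this
  let f : Filter I :=
    { sets := {X | A ∪ X ∈ supp I G h}
      univ_sets := by
        show A ∪ Set.univ ∈ supp I G h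
        rw [Set.union_univ]
        exact supp_univ h
      sets_of_superset := fun hX hXY => hmem_mono hXY hX
      inter_sets := fun hX hY => hsets_inter hX hY }
  have hmemf : ∀ X : Set I, X ∈ f ↔ A ∪ X ∈ supp I G h := fun X => Iff.rfl
  have hcompl : ∀ s : Set I, sᶜ ∉ f ↔ s ∈ f := by
    intro s
    constructor
    · intro hs
      have h1 : A ∪ sᶜ ∉ supp I G h := fun hcon => hs ((hmemf sᶜ).2 hcon)
      have h2 := hcrit sᶜ h1
      rw [show Set.univ \ sᶜ = s by simp, Set.union_comm] at h2
      exact (hmemf s).2 h2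
    · intro hs hsc
      have hint := hsets_inter ((hmemf s).1 hs) ((hmemf sᶜ).1 hsc)
      rw [Set.inter_compl_self, Set.union_empty] at hint
      exact hA hint
  let u : Ultrafilter I := Ultrafilter.ofComplNotMemIff f hcompl
  have hmemu : ∀ X : Set I, X ∈ u ↔ A ∪ X ∈ supp I G h := fun X => Iff.rfl
  refine ⟨u, ?_, hmemu⟩
  intro s hs
  rw [hmemu]
  let T : ℕ → Set I := fun n => Nat.rec Set.univ (fun k Tk => Tk ∩ (A ∪ s k)) n
  have hT0 : T 0 = Set.univ := rfl
  have hTsucc : ∀ n, T (n + 1) = T n ∩ (A ∪ s n) := fun n => rfl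
  have hTdec : ∀ n, T (n + 1) ⊆ T n := by
    intro n
    rw [hTsucc]
    exact Set.inter_subset_left
  have hTsupp : ∀ n, T n ∈ supp I G h := by
    intro n
    induction n with
    | zero => rw [hT0]; exact supp_univ h
    | succ n ih =>
      rw [hTsucc]
      exact supp_inter h ih ((hmemu (s n)).1 (hs n))
  have hTeq : (⋂ n, T n) = A ∪ ⋂ n, s n := by
    ext i
    simp only [Set.mem_iInter, Set.mem_union]
    constructor
    · intro hi
      by_cases hiA : i ∈ A
      · exact Or.inl hiA
      · refine Or.inr fun n => ?_
        have h3 := hi (n + 1)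
        rw [hTsucc] at h3
        rcases h3.2 with h' | h'
        · exact absurd h' hiA
        · exact h'
    · intro hi n
      induction n with
      | zero => rw [hT0]; exact Set.mem_univ i
      | succ n ih =>
        rw [hTsucc]
        refine ⟨ih, ?_⟩
        rcases hi with h' | h'
        · exact Or.inl h'
        · exact Or.inr (h' n)
  rw [← hTeq]
  exact supp_iInter h T hTdec hTsupp

end
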